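/- Let G = Σ1 × ⋯ × Σr be a direct product of r ≥ 2 genus-2 surface groups Σk = ⟨a1^(k), a2^(k), b1^(k), b2^(k) | [a1^(k),a2^(k)][b1^(k),b2^(k)]⟩, and let φ: G → ℤ² be the homomorphism sending every a_i^(k) and b_i^(k) to the i-th standard basis vector of ℤ². Then the kernel K = ker φ is generated by the finite set {c1, c2, d} ∪ {f_i^(k), g_i^(k) : i = 1,2, k = 1,…,r}, where c_i = a_i^(1)(b_i^(1))^{-1}, d = [b_1^(1), b_2^(1)], f_i^(k) = a_i^(1)(a_i^(k))^{-1}, and g_i^(k) = b_i^(1)(b_i^(k))^{-1}. -/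

import Mathlib

open FreeGroup
open scoped commutatorElement

def surfRels : Set (FreeGroup (Fin 4)) :=
  {⁅FreeGroup.of (0 : Fin 4), FreeGroup.of (1 : Fin 4)⁆ * ⁅FreeGroup.of (2 : Fin 4), FreeGroup.of (3 : Fin 4)⁆}

/-- The genus-2 surface group. -/
abbrev Surf := PresentedGroup surfRels

def a (i : Fin 2) : Surf := PresentedGroup.of ⟨i.val, by omega⟩
def b (i : Fin 2) : Surf := PresentedGroup.of ⟨i.val + 2, by omega⟩

abbrev M := Multiplicative (ℤ × ℤ)

def φgen : Fin 4 → M :=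
  fun n => Multiplicative.ofAdd (if n.val = 0 ∨ n.val = 2 then ((1 : ℤ), (0 : ℤ)) else ((0 : ℤ), (1 : ℤ)))

lemma φrels : ∀ r ∈ surfRels, FreeGroup.lift φgen r = 1 := by
  rintro r hr
  simp only [surfRels, Set.mem_singleton_iff] at hr
  subst hr
  have h1 : (FreeGroup.lift φgen) (⁅FreeGroup.of (0 : Fin 4), FreeGroup.of (1 : Fin 4)⁆ * ⁅FreeGroup.of (2 : Fin 4), FreeGroup.of (3 : Fin 4)⁆) = ⁅φgen 0, φgen 1⁆ * ⁅φgen 2, φgen 3⁆ := by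
    simp [commutatorElement_def]
  rw [h1, commutatorElement_eq_one_iff_mul_comm.mpr (mul_comm _ _),
    commutatorElement_eq_one_iff_mul_comm.mpr (mul_comm _ _), one_mul]

/-- The homomorphism Σ → ℤ² sending aᵢ, bᵢ to the i-th standard basis vector. -/
def φ1 : Surf →* M := PresentedGroup.toGroup φrels

/-- The direct product of r genus-2 surface groups. -/
abbrev GG (r : ℕ) := ∀ _ : Fin r, Surf

def A (r : ℕ) (i : Fin 2) (k : Fin r) : GG r := Pi.mulSingle k (a i)
def B (r : ℕ) (i : Fin 2) (k : Fin r) : GG r := Pi.mulSingle k (b i)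

/-- The homomorphism G = Σ₁ × ⋯ × Σr → ℤ² sending all aᵢ, bᵢ to eᵢ. -/
def Φ (r : ℕ) : GG r →* M := ∏ k : Fin r, φ1.comp (Pi.evalMonoidHom (fun _ => Surf) k)

/-! ### Auxiliary infrastructure -/

section GenericGroup

variable {G' : Type*} [Group G']

lemma StAux.conj_eq_of_commute {t z : G'} (h : Commute t z) : t * z * t⁻¹ = z := by
  rw [h.eq, mul_inv_cancel_right]

lemma StAux.conj_eq_of_commute' {t z : G'} (h : Commute t z) : t⁻¹ * z * t = z := by
  rw [mul_assoc, ← h.eq, ← mul_assoc, inv_mul_cancel, one_mul]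

lemma StAux.conj_aux {H : Subgroup G'} {τ t z : G'} (hτ : τ ∈ H) (hz : z ∈ H)
    (h1 : Commute t z) (h2 : Commute t τ) :
    (τ * t) * z * (τ * t)⁻¹ ∈ H ∧ (τ * t)⁻¹ * z * (τ * t) ∈ H := by
  constructor
  · have e : (τ * t) * z * (τ * t)⁻¹ = τ * (t * z * t⁻¹) * τ⁻¹ := by group
    rw [e, StAux.conj_eq_of_commute h1]
    exact H.mul_mem (H.mul_mem hτ hz) (H.inv_mem hτ)
  · have e : (τ * t)⁻¹ * z * (τ * t) = t⁻¹ * (τ⁻¹ * z * τ) * t := by group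
    have hc : Commute t (τ⁻¹ * z * τ) := (h2.inv_right.mul_right h1).mul_right h2
    rw [e, StAux.conj_eq_of_commute' hc]
    exact H.mul_mem (H.mul_mem (H.inv_mem hτ) hz) hτ

lemma StAux.conj_id1 (X Y Z : G') (h : Commute X Z) :
    X * (Y * Z⁻¹) * X⁻¹ = ⁅X, Y⁆ * (Y * Z⁻¹) := by
  have h2 : Z⁻¹ * X⁻¹ = X⁻¹ * Z⁻¹ := (h.inv_inv.eq).symm
  rw [commutatorElement_def]
  calc X * (Y * Z⁻¹) * X⁻¹ = X * Y * (Z⁻¹ * X⁻¹) := by group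
    _ = X * Y * (X⁻¹ * Z⁻¹) := by rw [h2]
    _ = X * Y * X⁻¹ * Y⁻¹ * (Y * Z⁻¹) := by group

lemma StAux.conj_id3 (S Y Z : G') (h : Commute S Y) :
    S * (Y * Z⁻¹) * S⁻¹ = (Y * Z⁻¹) * ⁅Z, S⁆ := by
  rw [commutatorElement_def]
  calc S * (Y * Z⁻¹) * S⁻¹ = S * Y * (Z⁻¹ * S⁻¹) := by group
    _ = Y * S * (Z⁻¹ * S⁻¹) := by rw [h.eq]
    _ = Y * Z⁻¹ * (Z * S * Z⁻¹ * S⁻¹) := by group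

lemma StAux.comm_inv_left (X Y : G') : ⁅X⁻¹, Y⁆ = X⁻¹ * ⁅Y, X⁆ * X := by
  rw [commutatorElement_def, commutatorElement_def]; group

lemma StAux.comm_inv_right (Z S : G') : ⁅Z, S⁻¹⁆ = S⁻¹ * ⁅S, Z⁆ * S := by
  rw [commutatorElement_def, commutatorElement_def]; group

lemma StAux.commute_commutator {s x y : G'} (h1 : Commute s x) (h2 : Commute s y) :
    Commute s ⁅x, y⁆ := by
  rw [commutatorElement_def]
  exact ((h1.mul_right h2).mul_right h1.inv_right).mul_right h2.inv_right

lemma StAux.conj_closure {S : Set G'} {s : G'}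
    (hs : ∀ y ∈ S, s * y * s⁻¹ ∈ Subgroup.closure S) :
    ∀ h ∈ Subgroup.closure S, s * h * s⁻¹ ∈ Subgroup.closure S := by
  intro h hh
  induction hh using Subgroup.closure_induction with
  | mem y hy => exact hs y hy
  | one => simpa using one_mem _
  | mul x y _ _ ihx ihy =>
      have e : s * (x * y) * s⁻¹ = (s * x * s⁻¹) * (s * y * s⁻¹) := by group
      rw [e]; exact mul_mem ihx ihy
  | inv x _ ih =>
      have e : s * x⁻¹ * s⁻¹ = (s * x * s⁻¹)⁻¹ := by group
      rw [e]; exact inv_mem ih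

/-- if conjugation by `s` and by `s⁻¹` maps the generators into the closure, then `s` is in
the normalizer of the closure. -/
lemma StAux.mem_normalizer {S : Set G'} {s : G'}
    (hs : ∀ y ∈ S, s * y * s⁻¹ ∈ Subgroup.closure S)
    (hs' : ∀ y ∈ S, s⁻¹ * y * s ∈ Subgroup.closure S) :
    s ∈ Subgroup.normalizer (Subgroup.closure S : Set G') := by
  rw [Subgroup.mem_normalizer_iff]
  intro h
  constructor
  · exact fun hh => StAux.conj_closure hs h hh
  · intro hh
    have := StAux.conj_closure (s := s⁻¹) (by simpa using hs') _ hh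
    simpa [mul_assoc] using this
end GenericGroup

/-! ### Specific set-up -/

abbrev PP (r : ℕ) (k : Fin r) (x : Surf) : GG r := Pi.mulSingle k x

abbrev WW (n : Fin 4) : Surf := PresentedGroup.of (rels := surfRels) n

/-- the generating set of the statement, with base slot `o`. -/
def Sgen (r : ℕ) (o : Fin r) : Set (GG r) :=
  ({A r 0 o * (B r 0 o)⁻¹,
    A r 1 o * (B r 1 o)⁻¹,
    ⁅B r 0 o, B r 1 o⁆} ∪
   {x | ∃ (i : Fin 2) (k : Fin r), x = A r i o * (A r i k)⁻¹} ∪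
   {x | ∃ (i : Fin 2) (k : Fin r), x = B r i o * (B r i k)⁻¹})

section Main

variable (r : ℕ) (o z1 : Fin r) (hz1 : z1 ≠ o)

local notation "H" => Subgroup.closure (Sgen r o)

lemma cm {k l : Fin r} (hkl : k ≠ l) (x y : Surf) :
    Commute (PP r k x) (PP r l y) := by
  exact Pi.mulSingle_commute (f := fun _ : Fin r => Surf) hkl x y

lemma relS : ⁅(WW 0 : Surf), WW 1⁆ * ⁅WW 2, WW 3⁆ = 1 := by
  have h : (QuotientGroup.mk' (Subgroup.normalClosure surfRels))
      (⁅FreeGroup.of (0 : Fin 4), FreeGroup.of (1 : Fin 4)⁆ *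
        ⁅FreeGroup.of (2 : Fin 4), FreeGroup.of (3 : Fin 4)⁆) = 1 := by
    rw [QuotientGroup.mk'_apply, QuotientGroup.eq_one_iff]
    exact Subgroup.subset_normalClosure rfl
  simp only [_root_.map_mul, map_commutatorElement] at h
  exact h

lemma relP (k : Fin r) : ⁅PP r k (WW 0), PP r k (WW 1)⁆ * ⁅PP r k (WW 2), PP r k (WW 3)⁆ = 1 := by
  have h : PP r k (⁅WW 0, WW 1⁆ * ⁅WW 2, WW 3⁆) = PP r k 1 := by rw [relS]
  simpa only [commutatorElement_def, Pi.mulSingle_mul, Pi.mulSingle_inv,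
    Pi.mulSingle_one] using h

/- membership of the generators, in `PP/WW` form -/
lemma hmem_c1 : PP r o (WW 0) * (PP r o (WW 2))⁻¹ ∈ H :=
  Subgroup.subset_closure (Or.inl (Or.inl (Set.mem_insert _ _)))

lemma hmem_c2 : PP r o (WW 1) * (PP r o (WW 3))⁻¹ ∈ H :=
  Subgroup.subset_closure (Or.inl (Or.inl (Set.mem_insert_of_mem _ (Set.mem_insert _ _))))

lemma hmem_d : ⁅PP r o (WW 2), PP r o (WW 3)⁆ ∈ H :=
  Subgroup.subset_closure
    (Or.inl (Or.inl (Set.mem_insert_of_mem _ (Set.mem_insert_of_mem _ rfl))))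

lemma hmem_T : ∀ (n : Fin 4) (k : Fin r), PP r o (WW n) * (PP r k (WW n))⁻¹ ∈ H := by
  intro n k
  fin_cases n
  · exact Subgroup.subset_closure (Or.inl (Or.inr ⟨0, k, rfl⟩))
  · exact Subgroup.subset_closure (Or.inl (Or.inr ⟨1, k, rfl⟩))
  · exact Subgroup.subset_closure (Or.inr ⟨0, k, rfl⟩)
  · exact Subgroup.subset_closure (Or.inr ⟨1, k, rfl⟩)

/-- the key conjugation trick: conjugating `z ∈ H` by the slot-`k` letter `n` stays in `H`,
provided `z` commutes with the slot-`k'` letter `n` for some other slot `k'`. -/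
lemma conj_slot {k k' : Fin r} (hkk' : k' ≠ k) (n : Fin 4) {z : GG r}
    (hτ : PP r k (WW n) * (PP r k' (WW n))⁻¹ ∈ H)
    (hz : z ∈ H) (hcz : Commute (PP r k' (WW n)) z) :
    PP r k (WW n) * z * (PP r k (WW n))⁻¹ ∈ H ∧
      (PP r k (WW n))⁻¹ * z * (PP r k (WW n)) ∈ H := by
  have hd : PP r k (WW n) = (PP r k (WW n) * (PP r k' (WW n))⁻¹) * PP r k' (WW n) := by group
  have h2 : Commute (PP r k' (WW n)) (PP r k (WW n) * (PP r k' (WW n))⁻¹) :=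
    (cm r hkk' _ _).mul_right (Commute.refl _).inv_right
  rw [hd]
  exact StAux.conj_aux hτ hz hcz h2

include hz1 in
/-- commutators of slot-`o` letters are in `H`. -/
lemma comm0 : ∀ m n : Fin 4, ⁅PP r o (WW m), PP r o (WW n)⁆ ∈ H := by
  have hcomm : ∀ (p : Fin 4) (x y : Surf),
      Commute (PP r z1 (WW p)) ((PP r o x * (PP r o y)⁻¹)⁻¹) :=
    fun p x y => ((cm r hz1 _ _).mul_right (cm r hz1 _ _).inv_right).inv_right
  -- conjugates of c₁⁻¹, c₂⁻¹ by slot-o letters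
  have hv : ∀ (p : Fin 4) {z : GG r}, z ∈ H → Commute (PP r z1 (WW p)) z →
      PP r o (WW p) * z * (PP r o (WW p))⁻¹ ∈ H :=
    fun p z hz hc => (conj_slot r o hz1 p (hmem_T r o p z1) hz hc).1
  have hv1 : ∀ p : Fin 4, PP r o (WW p) * (PP r o (WW 0) * (PP r o (WW 2))⁻¹)⁻¹ *
      (PP r o (WW p))⁻¹ ∈ H :=
    fun p => hv p (inv_mem (hmem_c1 r o)) (hcomm p _ _)
  have hv2 : ∀ p : Fin 4, PP r o (WW p) * (PP r o (WW 1) * (PP r o (WW 3))⁻¹)⁻¹ *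
      (PP r o (WW p))⁻¹ ∈ H :=
    fun p => hv p (inv_mem (hmem_c2 r o)) (hcomm p _ _)
  -- the six basic commutators
  have h23 : ⁅PP r o (WW 2), PP r o (WW 3)⁆ ∈ H := hmem_d r o
  have h01 : ⁅PP r o (WW 0), PP r o (WW 1)⁆ ∈ H := by
    have := relP r o
    have e : ⁅PP r o (WW 0), PP r o (WW 1)⁆ = (⁅PP r o (WW 2), PP r o (WW 3)⁆)⁻¹ :=
      eq_inv_of_mul_eq_one_left this
    rw [e]; exact inv_mem h23
  have h02 : ⁅PP r o (WW 0), PP r o (WW 2)⁆ ∈ H := by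
    have e : ⁅PP r o (WW 0), PP r o (WW 2)⁆ =
        (PP r o (WW 0) * (PP r o (WW 2))⁻¹) *
        (PP r o (WW 2) * (PP r o (WW 0) * (PP r o (WW 2))⁻¹)⁻¹ * (PP r o (WW 2))⁻¹) := by
      rw [commutatorElement_def]; group
    rw [e]; exact mul_mem (hmem_c1 r o) (hv1 2)
  have h03 : ⁅PP r o (WW 0), PP r o (WW 3)⁆ ∈ H := by
    have e : ⁅PP r o (WW 0), PP r o (WW 3)⁆ =
        (PP r o (WW 0) * (PP r o (WW 2))⁻¹) * ⁅PP r o (WW 2), PP r o (WW 3)⁆ *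
        (PP r o (WW 3) * (PP r o (WW 0) * (PP r o (WW 2))⁻¹)⁻¹ * (PP r o (WW 3))⁻¹) := by
      rw [commutatorElement_def, commutatorElement_def]; group
    rw [e]; exact mul_mem (mul_mem (hmem_c1 r o) h23) (hv1 3)
  have h12 : ⁅PP r o (WW 1), PP r o (WW 2)⁆ ∈ H := by
    have e : ⁅PP r o (WW 1), PP r o (WW 2)⁆ =
        (PP r o (WW 1) * (PP r o (WW 3))⁻¹) * (⁅PP r o (WW 2), PP r o (WW 3)⁆)⁻¹ *
        (PP r o (WW 2) * (PP r o (WW 1) * (PP r o (WW 3))⁻¹)⁻¹ * (PP r o (WW 2))⁻¹) := by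
      rw [commutatorElement_def, commutatorElement_def]; group
    rw [e]; exact mul_mem (mul_mem (hmem_c2 r o) (inv_mem h23)) (hv2 2)
  have h13 : ⁅PP r o (WW 1), PP r o (WW 3)⁆ ∈ H := by
    have e : ⁅PP r o (WW 1), PP r o (WW 3)⁆ =
        (PP r o (WW 1) * (PP r o (WW 3))⁻¹) *
        (PP r o (WW 3) * (PP r o (WW 1) * (PP r o (WW 3))⁻¹)⁻¹ * (PP r o (WW 3))⁻¹) := by
      rw [commutatorElement_def]; group
    rw [e]; exact mul_mem (hmem_c2 r o) (hv2 3)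
  have swap : ∀ m n : Fin 4, ⁅PP r o (WW m), PP r o (WW n)⁆ ∈ H →
      ⁅PP r o (WW n), PP r o (WW m)⁆ ∈ H := by
    intro m n h
    rw [← commutatorElement_inv]; exact inv_mem h
  have diag : ∀ n : Fin 4, ⁅PP r o (WW n), PP r o (WW n)⁆ ∈ H := by
    intro n; rw [commutatorElement_self]; exact one_mem _
  intro m n
  fin_cases m <;> fin_cases n
  · exact diag 0
  · exact h01
  · exact h02
  · exact h03
  · exact swap 0 1 h01
  · exact diag 1
  · exact h12
  · exact h13
  · exact swap 0 2 h02
  · exact swap 1 2 h12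
  · exact diag 2
  · exact h23
  · exact swap 0 3 h03
  · exact swap 1 3 h13
  · exact swap 2 3 h23
  · exact diag 3

include hz1 in
/-- conjugates of the transfer generators by slot-`o` letters. -/
lemma conj0T {k : Fin r} (hk : k ≠ o) (m n : Fin 4) :
    PP r o (WW m) * (PP r o (WW n) * (PP r k (WW n))⁻¹) * (PP r o (WW m))⁻¹ ∈ H := by
  rw [StAux.conj_id1 _ _ _ (cm r (Ne.symm hk) (WW m) (WW n))]
  exact mul_mem (comm0 r o z1 hz1 m n) (hmem_T r o n k)

include hz1 in
/-- commutators of slot-`k` letters, `k ≠ o`, are in `H`. -/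
lemma commk {k : Fin r} (hk : k ≠ o) (m n : Fin 4) :
    ⁅PP r k (WW m), PP r k (WW n)⁆ ∈ H := by
  have e : ⁅PP r k (WW m), PP r k (WW n)⁆ =
      (PP r o (WW m) * (PP r k (WW m))⁻¹)⁻¹ *
      (PP r o (WW m) * (PP r o (WW n) * (PP r k (WW n))⁻¹)⁻¹ * (PP r o (WW m))⁻¹) *
      ⁅PP r o (WW m), PP r o (WW n)⁆ *
      (PP r o (WW n) * (PP r o (WW m) * (PP r k (WW m))⁻¹) * (PP r o (WW n))⁻¹) *
      (PP r o (WW n) * (PP r k (WW n))⁻¹) := by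
    rw [commutatorElement_def, commutatorElement_def]; group
  have h1 : PP r o (WW m) * (PP r o (WW n) * (PP r k (WW n))⁻¹)⁻¹ * (PP r o (WW m))⁻¹ ∈ H := by
    have e2 : PP r o (WW m) * (PP r o (WW n) * (PP r k (WW n))⁻¹)⁻¹ * (PP r o (WW m))⁻¹ =
        (PP r o (WW m) * (PP r o (WW n) * (PP r k (WW n))⁻¹) * (PP r o (WW m))⁻¹)⁻¹ := by group
    rw [e2]; exact inv_mem (conj0T r o z1 hz1 hk m n)
  rw [e]
  exact mul_mem (mul_mem (mul_mem (mul_mem (inv_mem (hmem_T r o m k)) h1)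
    (comm0 r o z1 hz1 m n)) (conj0T r o z1 hz1 hk n m)) (hmem_T r o n k)

include hz1 in
/-- conjugates of the transfer generators by arbitrary letters. -/
lemma conjT (p : Fin 4) (l : Fin r) (n : Fin 4) (k : Fin r) :
    PP r l (WW p) * (PP r o (WW n) * (PP r k (WW n))⁻¹) * (PP r l (WW p))⁻¹ ∈ H ∧
    (PP r l (WW p))⁻¹ * (PP r o (WW n) * (PP r k (WW n))⁻¹) * (PP r l (WW p)) ∈ H := by
  by_cases hk : k = o
  · subst hk
    rw [mul_inv_cancel]
    constructor
    · rw [show PP r l (WW p) * (1 : GG r) * (PP r l (WW p))⁻¹ = 1 from by group]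
      exact one_mem _
    · rw [show (PP r l (WW p))⁻¹ * (1 : GG r) * PP r l (WW p) = 1 from by group]
      exact one_mem _
  · by_cases hl : l = o
    · obtain rfl : o = l := hl.symm
      constructor
      · rw [StAux.conj_id1 _ _ _ (cm r (Ne.symm hk) (WW p) (WW n))]
        exact mul_mem (comm0 r o z1 hz1 p n) (hmem_T r o n k)
      · have e := StAux.conj_id1 ((PP r o (WW p))⁻¹) (PP r o (WW n)) (PP r k (WW n))
          ((cm r (Ne.symm hk) (WW p) (WW n)).inv_left)
        rw [inv_inv] at e
        rw [e]
        refine mul_mem ?_ (hmem_T r o n k)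
        rw [StAux.comm_inv_left]
        exact (conj_slot r o hz1 p (hmem_T r o p z1) (comm0 r o z1 hz1 n p)
          (StAux.commute_commutator (cm r hz1 _ _) (cm r hz1 _ _))).2
    · by_cases hlk : l = k
      · subst hlk
        constructor
        · rw [StAux.conj_id3 _ _ _ (cm r hk (WW p) (WW n))]
          exact mul_mem (hmem_T r o n l) (commk r o z1 hz1 hk n p)
        · have e := StAux.conj_id3 ((PP r l (WW p))⁻¹) (PP r o (WW n)) (PP r l (WW n))
            ((cm r hk (WW p) (WW n)).inv_left)
          rw [inv_inv] at e
          rw [e]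
          refine mul_mem (hmem_T r o n l) ?_
          rw [StAux.comm_inv_right]
          refine (conj_slot r o (k := l) (k' := o) (Ne.symm hl) p ?_
            (commk r o z1 hz1 hk p n) ?_).2
          · have h2 := inv_mem (hmem_T r o p l)
            rwa [mul_inv_rev, inv_inv] at h2
          · exact StAux.commute_commutator (cm r (Ne.symm hl) _ _) (cm r (Ne.symm hl) _ _)
      · have hcomm : Commute (PP r l (WW p)) (PP r o (WW n) * (PP r k (WW n))⁻¹) :=
          (cm r hl _ _).mul_right (cm r hlk _ _).inv_right
        exact ⟨by rw [StAux.conj_eq_of_commute hcomm]; exact hmem_T r o n k,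
               by rw [StAux.conj_eq_of_commute' hcomm]; exact hmem_T r o n k⟩

include hz1 in
/-- conjugates of purely-slot-`o` elements of `H` by arbitrary letters. -/
lemma conjCD (p : Fin 4) (l : Fin r) {z : GG r} (hz : z ∈ H)
    (hz0 : ∀ k' : Fin r, k' ≠ o → Commute (PP r k' (WW p)) z) :
    PP r l (WW p) * z * (PP r l (WW p))⁻¹ ∈ H ∧
      (PP r l (WW p))⁻¹ * z * (PP r l (WW p)) ∈ H := by
  by_cases hl : l = o
  · obtain rfl : o = l := hl.symm
    exact conj_slot r o hz1 p (hmem_T r o p z1) hz (hz0 z1 hz1)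
  · have hcomm := hz0 l hl
    exact ⟨by rw [StAux.conj_eq_of_commute hcomm]; exact hz,
           by rw [StAux.conj_eq_of_commute' hcomm]; exact hz⟩

include hz1 in
lemma letters_normalizer (p : Fin 4) (l : Fin r) :
    PP r l (WW p) ∈ Subgroup.normalizer (Subgroup.closure (Sgen r o) : Set (GG r)) := by
  have key : ∀ y ∈ Sgen r o, PP r l (WW p) * y * (PP r l (WW p))⁻¹ ∈ H ∧
      (PP r l (WW p))⁻¹ * y * (PP r l (WW p)) ∈ H := by
    rintro y (((rfl | rfl | rfl) | ⟨i, k, rfl⟩) | ⟨i, k, rfl⟩)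
    · exact conjCD r o z1 hz1 p l (hmem_c1 r o)
        (fun k' hk' => (cm r hk' _ _).mul_right (cm r hk' _ _).inv_right)
    · exact conjCD r o z1 hz1 p l (hmem_c2 r o)
        (fun k' hk' => (cm r hk' _ _).mul_right (cm r hk' _ _).inv_right)
    · exact conjCD r o z1 hz1 p l (hmem_d r o)
        (fun k' hk' => StAux.commute_commutator (cm r hk' _ _) (cm r hk' _ _))
    · fin_cases i
      · exact conjT r o z1 hz1 p l 0 k
      · exact conjT r o z1 hz1 p l 1 k
    · fin_cases i
      · exact conjT r o z1 hz1 p l 2 k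
      · exact conjT r o z1 hz1 p l 3 k
  exact StAux.mem_normalizer (fun y hy => (key y hy).1) (fun y hy => (key y hy).2)

include hz1 in
lemma H_normal : (Subgroup.closure (Sgen r o)).Normal := by
  apply Subgroup.normalizer_eq_top_iff.mp
  rw [eq_top_iff]
  rintro g -
  refine Subgroup.pi_mem_of_mulSingle_mem g (fun k => ?_)
  have main : ∀ σ : Surf, Pi.mulSingle k σ ∈ Subgroup.normalizer (Subgroup.closure (Sgen r o) : Set (GG r)) := by
    intro σ
    have hσ : σ ∈ Subgroup.closure (Set.range (PresentedGroup.of (rels := surfRels))) := by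
      rw [PresentedGroup.closure_range_of]; trivial
    induction hσ using Subgroup.closure_induction with
    | mem τ hτ => obtain ⟨n, rfl⟩ := hτ; exact letters_normalizer r o z1 hz1 n k
    | one => rw [Pi.mulSingle_one]; exact one_mem _
    | mul x y _ _ ihx ihy => rw [Pi.mulSingle_mul]; exact mul_mem ihx ihy
    | inv x _ ih => rw [Pi.mulSingle_inv]; exact inv_mem ih
  exact main (g k)

/-! ### The image computation -/

lemma Phi_single (k : Fin r) (x : Surf) : Φ r (Pi.mulSingle k x) = φ1 x := by
  show (∏ l : Fin r, φ1.comp (Pi.evalMonoidHom (fun _ => Surf) l)) (Pi.mulSingle k x) = φ1 x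
  rw [MonoidHom.finset_prod_apply]
  refine (Fintype.prod_eq_single k ?_).trans ?_
  · intro l hl
    simp only [MonoidHom.comp_apply]
    have h1 : (Pi.evalMonoidHom (fun _ : Fin r => Surf) l) (Pi.mulSingle k x) = 1 :=
      Pi.mulSingle_eq_of_ne (M := fun _ : Fin r => Surf) hl x
    rw [h1, _root_.map_one]
  · simp only [MonoidHom.comp_apply]
    have h1 : (Pi.evalMonoidHom (fun _ : Fin r => Surf) k) (Pi.mulSingle k x) = x :=
      Pi.mulSingle_eq_same (M := fun _ : Fin r => Surf) k x
    rw [h1]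

lemma phi_W (n : Fin 4) : φ1 (WW n) = φgen n := PresentedGroup.toGroup.of φrels

lemma Phi_letter (k : Fin r) (n : Fin 4) : Φ r (PP r k (WW n)) = φgen n := by
  rw [Phi_single]; exact phi_W n

lemma Sgen_le_ker : ∀ y ∈ Sgen r o, y ∈ (Φ r).ker := by
  have haux : ∀ (m n : Fin 4) (k k' : Fin r), φgen m = φgen n →
      PP r k (WW m) * (PP r k' (WW n))⁻¹ ∈ (Φ r).ker := by
    intro m n k k' h
    rw [MonoidHom.mem_ker, _root_.map_mul, _root_.map_inv, Phi_letter, Phi_letter, h,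
      mul_inv_cancel]
  rintro y (((rfl | rfl | rfl) | ⟨i, k, rfl⟩) | ⟨i, k, rfl⟩)
  · exact haux 0 2 o o rfl
  · exact haux 1 3 o o rfl
  · rw [MonoidHom.mem_ker]
    show Φ r ⁅PP r o (WW 2), PP r o (WW 3)⁆ = 1
    rw [map_commutatorElement]
    exact commutatorElement_eq_one_iff_mul_comm.mpr (mul_comm _ _)
  · fin_cases i
    · exact haux 0 0 o k rfl
    · exact haux 1 1 o k rfl
  · fin_cases i
    · exact haux 2 2 o k rfl
    · exact haux 3 3 o k rfl

end Main

/-! ### The quotient homomorphism ℤ² → Q -/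

def psiQ {Q : Type*} [Group Q] (q1 q2 : Q) (hq : Commute q1 q2) : M →* Q :=
  MonoidHom.mk' (fun m => q1 ^ (Multiplicative.toAdd m).1 * q2 ^ (Multiplicative.toAdd m).2)
    (by
      intro x y
      simp only [toAdd_mul, Prod.fst_add, Prod.snd_add, zpow_add]
      exact ((hq.zpow_zpow _ _).mul_mul_mul_comm _ _))

lemma psiQ_e1 {Q : Type*} [Group Q] (q1 q2 : Q) (hq : Commute q1 q2) :
    psiQ q1 q2 hq (φgen 0) = q1 := by
  show q1 ^ (1 : ℤ) * q2 ^ (0 : ℤ) = q1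
  rw [zpow_one, zpow_zero, mul_one]

lemma psiQ_e2 {Q : Type*} [Group Q] (q1 q2 : Q) (hq : Commute q1 q2) :
    psiQ q1 q2 hq (φgen 1) = q2 := by
  show q1 ^ (0 : ℤ) * q2 ^ (1 : ℤ) = q2
  rw [zpow_one, zpow_zero, one_mul]

section Final

variable (r : ℕ) (o z1 : Fin r) (hz1 : z1 ≠ o)

include hz1 in
lemma closure_eq_ker : Subgroup.closure (Sgen r o) = (Φ r).ker := by
  haveI hN : (Subgroup.closure (Sgen r o)).Normal := H_normal r o z1 hz1
  apply le_antisymm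
  · exact (Subgroup.closure_le _).mpr (fun y hy => Sgen_le_ker r o y hy)
  · intro x hx
    have hq : Commute (QuotientGroup.mk' (Subgroup.closure (Sgen r o)) (PP r o (WW 0)))
        (QuotientGroup.mk' (Subgroup.closure (Sgen r o)) (PP r o (WW 1))) := by
      refine commutatorElement_eq_one_iff_mul_comm.mp ?_
      have h1 : ⁅QuotientGroup.mk' (Subgroup.closure (Sgen r o)) (PP r o (WW 0)),
          QuotientGroup.mk' (Subgroup.closure (Sgen r o)) (PP r o (WW 1))⁆
          = QuotientGroup.mk' (Subgroup.closure (Sgen r o)) ⁅PP r o (WW 0), PP r o (WW 1)⁆ :=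
        (map_commutatorElement _ _ _).symm
      rw [h1]
      exact (QuotientGroup.eq_one_iff _).mpr (comm0 r o z1 hz1 0 1)
    set π := QuotientGroup.mk' (Subgroup.closure (Sgen r o)) with hπ
    set ψ := psiQ _ _ hq with hψdef
    have keydiff : ∀ (n : Fin 4) (k : Fin r), π (PP r k (WW n)) = π (PP r o (WW n)) := by
      intro n k
      rw [QuotientGroup.mk'_eq_mk']
      refine ⟨(PP r k (WW n))⁻¹ * PP r o (WW n), ?_, by group⟩
      have hh := hN.conj_mem _ (hmem_T r o n k) ((PP r k (WW n))⁻¹)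
      rwa [show (PP r k (WW n))⁻¹ * (PP r o (WW n) * (PP r k (WW n))⁻¹) *
        ((PP r k (WW n))⁻¹)⁻¹ = (PP r k (WW n))⁻¹ * PP r o (WW n) from by group] at hh
    have keyc : ∀ n m : Fin 4, PP r o (WW n) * (PP r o (WW m))⁻¹ ∈ Subgroup.closure (Sgen r o) →
        π (PP r o (WW m)) = π (PP r o (WW n)) := by
      intro n m hc
      rw [QuotientGroup.mk'_eq_mk']
      refine ⟨(PP r o (WW m))⁻¹ * PP r o (WW n), ?_, by group⟩
      have hh := hN.conj_mem _ hc ((PP r o (WW m))⁻¹)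
      rwa [show (PP r o (WW m))⁻¹ * (PP r o (WW n) * (PP r o (WW m))⁻¹) *
        ((PP r o (WW m))⁻¹)⁻¹ = (PP r o (WW m))⁻¹ * PP r o (WW n) from by group] at hh
    have letters : ∀ (n : Fin 4) (k : Fin r),
        π (PP r k (WW n)) = ψ (Φ r (PP r k (WW n))) := by
      intro n k
      rw [Phi_letter]
      fin_cases n
      · show π (PP r k (WW 0)) = ψ (φgen 0)
        rw [hψdef, psiQ_e1]; exact keydiff 0 k
      · show π (PP r k (WW 1)) = ψ (φgen 1)
        rw [hψdef, psiQ_e2]; exact keydiff 1 k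
      · show π (PP r k (WW 2)) = ψ (φgen 2)
        rw [show φgen 2 = φgen 0 from rfl, hψdef, psiQ_e1]
        exact (keydiff 2 k).trans (keyc 0 2 (hmem_c1 r o))
      · show π (PP r k (WW 3)) = ψ (φgen 3)
        rw [show φgen 3 = φgen 1 from rfl, hψdef, psiQ_e2]
        exact (keydiff 3 k).trans (keyc 1 3 (hmem_c2 r o))
    have hmain : π x = ψ (Φ r x) := by
      have hx' : x ∈ MonoidHom.eqLocus π (ψ.comp (Φ r)) := by
        refine Subgroup.pi_mem_of_mulSingle_mem x (fun k => ?_)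
        have main : ∀ σ : Surf,
            Pi.mulSingle k σ ∈ MonoidHom.eqLocus π (ψ.comp (Φ r)) := by
          intro σ
          have hσ : σ ∈ Subgroup.closure (Set.range (PresentedGroup.of (rels := surfRels))) := by
            rw [PresentedGroup.closure_range_of]; trivial
          induction hσ using Subgroup.closure_induction with
          | mem τ hτ => obtain ⟨n, rfl⟩ := hτ; exact letters n k
          | one => rw [Pi.mulSingle_one]; exact one_mem _
          | mul u v _ _ ihu ihv => rw [Pi.mulSingle_mul]; exact mul_mem ihu ihv
          | inv u _ ih => rw [Pi.mulSingle_inv]; exact inv_mem ih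
        exact main (x k)
      exact hx'
    rw [MonoidHom.mem_ker.mp hx, _root_.map_one] at hmain
    exact (QuotientGroup.eq_one_iff x).mp hmain

end Final

/-- The kernel `K = ker φ` of `φ : Σ₁ × ⋯ × Σr → ℤ²` is generated by the finite set
`{c₁, c₂, d} ∪ {fᵢ⁽ᵏ⁾, gᵢ⁽ᵏ⁾}` where `cᵢ = aᵢ⁽¹⁾(bᵢ⁽¹⁾)⁻¹`, `d = [b₁⁽¹⁾, b₂⁽¹⁾]`,
`fᵢ⁽ᵏ⁾ = aᵢ⁽¹⁾(aᵢ⁽ᵏ⁾)⁻¹`, `gᵢ⁽ᵏ⁾ = bᵢ⁽¹⁾(bᵢ⁽ᵏ⁾)⁻¹`. -/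
theorem stmt2 (r : ℕ) (hr : 2 ≤ r) :
    Subgroup.closure
      ({A r 0 ⟨0, by omega⟩ * (B r 0 ⟨0, by omega⟩)⁻¹,
        A r 1 ⟨0, by omega⟩ * (B r 1 ⟨0, by omega⟩)⁻¹,
        ⁅B r 0 ⟨0, by omega⟩, B r 1 ⟨0, by omega⟩⁆} ∪
       {x | ∃ (i : Fin 2) (k : Fin r), x = A r i ⟨0, by omega⟩ * (A r i k)⁻¹} ∪
       {x | ∃ (i : Fin 2) (k : Fin r), x = B r i ⟨0, by omega⟩ * (B r i k)⁻¹}) = (Φ r).ker := by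
  exact closure_eq_ker r ⟨0, by omega⟩ ⟨1, by omega⟩ (Fin.ne_of_val_ne one_ne_zero)
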